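/- arXiv:1602.05094 — 2 statements merged into one kernel-verified Lean document; each statement's English description precedes it below -/
import Mathlib

section
/- Let (a_m) be a sequence of real numbers, C a positive integer and K a real constant, such that a_m/m^2 converges to some limit c as m → ∞, and a_m + a_{m+1} = ((m+1)^2 + K)/C for every m divisible by C. Then c = 1/(2C). -/
open Filter

set_option maxHeartbeats 1000000

/-- If `a_m / m²` converges to `c` and `a_m + a_{m+1} = ((m+1)² + K)/C` for all `m`
divisible by `C`, then `c = 1/(2C)`. -/
theorem stmt_4 (a : ℕ → ℝ) (C : ℕ) (hC : 0 < C) (K : ℝ) (c : ℝ)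
    (hlim : Tendsto (fun m : ℕ => a m / (m : ℝ) ^ 2) atTop (nhds c))
    (hrec : ∀ m : ℕ, C ∣ m → a m + a (m + 1) = (((m : ℝ) + 1) ^ 2 + K) / C) :
    c = 1 / (2 * C) := by
  have hC' : (0:ℝ) < C := by exact_mod_cast hC
  have hu : Tendsto (fun n : ℕ => (C:ℝ) * n) atTop atTop :=
    (tendsto_natCast_atTop_atTop).const_mul_atTop hC'
  have hε : Tendsto (fun n : ℕ => ((C:ℝ) * n)⁻¹) atTop (nhds 0) :=
    hu.inv_tendsto_atTop
  have hm : Tendsto (fun n : ℕ => C * n) atTop atTop := by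
    apply tendsto_atTop_atTop.2
    intro b
    exact ⟨b, fun n hn => le_trans hn (Nat.le_mul_of_pos_left n hC)⟩
  have hm1 : Tendsto (fun n : ℕ => C * n + 1) atTop atTop :=
    tendsto_atTop_mono (fun n => Nat.le_succ _) hm
  have h1 : Tendsto (fun n : ℕ => a (C*n) / ((C*n : ℕ) : ℝ)^2) atTop (nhds c) :=
    hlim.comp hm
  have h2 : Tendsto (fun n : ℕ => a (C*n+1) / ((C*n+1 : ℕ) : ℝ)^2) atTop (nhds c) :=
    hlim.comp hm1
  have hr : Tendsto (fun n : ℕ => (1 + ((C:ℝ)*n)⁻¹)^2) atTop (nhds 1) := by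
    have : Tendsto (fun n : ℕ => 1 + ((C:ℝ)*n)⁻¹) atTop (nhds (1 + 0)) :=
      tendsto_const_nhds.add hε
    simpa using this.pow 2
  have hL : Tendsto (fun n : ℕ => (a (C*n) + a (C*n+1)) / ((C:ℝ)*n)^2)
      atTop (nhds (c + c*1)) := by
    have h2' : Tendsto (fun n : ℕ => a (C*n+1) / ((C*n+1:ℕ):ℝ)^2 * (1 + ((C:ℝ)*n)⁻¹)^2)
        atTop (nhds (c*1)) := h2.mul hr
    have key : ∀ᶠ n : ℕ in atTop,
        a (C*n) / ((C*n:ℕ):ℝ)^2 + a (C*n+1) / ((C*n+1:ℕ):ℝ)^2 * (1 + ((C:ℝ)*n)⁻¹)^2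
          = (a (C*n) + a (C*n+1)) / ((C:ℝ)*n)^2 := by
      filter_upwards [eventually_ge_atTop 1] with n hn
      have hn' : (0:ℝ) < n := by exact_mod_cast hn
      have hn0 : ((C:ℝ)*n) ≠ 0 := by positivity
      have hn1 : ((C:ℝ)*n+1) ≠ 0 := by positivity
      push_cast
      field_simp
    exact Tendsto.congr' key (h1.add h2')
  have hR : Tendsto (fun n : ℕ => (a (C*n) + a (C*n+1)) / ((C:ℝ)*n)^2)
      atTop (nhds ((1/(C:ℝ)) * (1 + K * 0))) := by
    have hz : Tendsto (fun n : ℕ => K * (((C:ℝ)*n)⁻¹)^2) atTop (nhds (K * 0)) := by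
      have := (hε.pow 2)
      simpa using tendsto_const_nhds.mul this
    have hbase : Tendsto (fun n : ℕ =>
        (1/(C:ℝ)) * ((1 + ((C:ℝ)*n)⁻¹)^2 + K * (((C:ℝ)*n)⁻¹)^2))
        atTop (nhds ((1/(C:ℝ)) * (1 + K * 0))) := tendsto_const_nhds.mul (hr.add hz)
    have key : ∀ᶠ n : ℕ in atTop,
        (1/(C:ℝ)) * ((1 + ((C:ℝ)*n)⁻¹)^2 + K * (((C:ℝ)*n)⁻¹)^2)
          = (a (C*n) + a (C*n+1)) / ((C:ℝ)*n)^2 := by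
      filter_upwards [eventually_ge_atTop 1] with n hn
      have hn' : (0:ℝ) < n := by exact_mod_cast hn
      have hn0 : ((C:ℝ)*n) ≠ 0 := by positivity
      have hC0 : (C:ℝ) ≠ 0 := ne_of_gt hC'
      have := hrec (C*n) ⟨n, rfl⟩
      rw [this]
      push_cast
      field_simp
    exact Tendsto.congr' key hbase
  have heq : c + c*1 = (1/(C:ℝ)) * (1 + K * 0) := tendsto_nhds_unique hL hR
  have hC0 : (C:ℝ) ≠ 0 := ne_of_gt hC'
  field_simp at heq ⊢
  linarith
end

section
/- Let R = ⊕_{k≥0} R_k be a graded ℂ-algebra with R_k finite dimensional, v a real valuation on R with c₁v₀ ≤ v ≤ c₂v₀ as above, and ℱ^x R_k the leading-component filtration associated to v. Then for every m ∈ ℝ, ∑_{k=0}^∞ dim_ℂ(R_k / ℱ^m R_k) = dim_ℂ(R / 𝔞_m(v)), where 𝔞_m(v) = { f ∈ R : v(f) ≥ m } (and both sides are finite). -/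
open DirectSum

set_option synthInstance.maxHeartbeats 1000000 in
/-- Let `R = ⊕ₖ Rₖ` be a graded `ℂ`-algebra with finite dimensional pieces, `v` a real
valuation with `c₁ v₀ ≤ v ≤ c₂ v₀`, `ℱ^m Rₖ` the leading-component filtration and
`𝔞_m(v) = { f : v(f) ≥ m }` the valuation ideal.  Then
`∑ₖ dim (Rₖ / ℱ^m Rₖ) = dim (R / 𝔞_m(v))`. -/
theorem stmt_15 {R : Type*} [CommRing R] [Algebra ℂ R]
    (A : ℕ → Submodule ℂ R) [GradedAlgebra A]
    [∀ k, Module.Finite ℂ ↥(A k)]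
    (v : R → ℝ)
    (hmul : ∀ f g : R, f ≠ 0 → g ≠ 0 → v (f * g) = v f + v g)
    (hadd : ∀ f g : R, f ≠ 0 → g ≠ 0 → f + g ≠ 0 → min (v f) (v g) ≤ v (f + g))
    (v₀ : R → ℝ) (ld : R → R)
    (hv₀ : ∀ g : R, g ≠ 0 →
      IsLeast {x : ℝ | ∃ i : ℕ, (decompose A g) i ≠ 0 ∧ x = i} (v₀ g))
    (hld : ∀ g : R, g ≠ 0 → ∃ i : ℕ, ((decompose A g) i : R) = ld g ∧
      (decompose A g) i ≠ 0 ∧ ∀ j : ℕ, (decompose A g) j ≠ 0 → j ≤ i)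
    (c₁ c₂ : ℝ) (hc₁ : 0 < c₁) (hc₁₂ : c₁ ≤ c₂)
    (hsand : ∀ g : R, g ≠ 0 → c₁ * v₀ g ≤ v g ∧ v g ≤ c₂ * v₀ g)
    (m : ℝ)
    (F : ℕ → Submodule ℂ R)
    (hF : ∀ (k : ℕ) (f : R), f ∈ F k ↔
      f ∈ A k ∧ (f = 0 ∨ ∃ g : R, g ≠ 0 ∧ m ≤ v g ∧ ld g = f))
    (a : Submodule ℂ R)
    (ha : ∀ f : R, f ∈ a ↔ (f = 0 ∨ m ≤ v f)) :
    ∑' k : ℕ,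
        (Module.finrank ℂ (↥(A k) ⧸ (F k).comap (A k).subtype) : ℝ) =
      Module.finrank ℂ (R ⧸ a) := by
  classical
  set N : ℕ := ⌈m / c₁⌉₊ with hNdef
  have hNle : ∀ k : ℕ, N ≤ k → m ≤ c₁ * k := by
    intro k hk
    rcases le_or_gt m 0 with hm | hm
    · exact hm.trans (by positivity)
    · have h1 : m / c₁ ≤ (N : ℝ) := Nat.le_ceil _
      have h2 : (N : ℝ) ≤ (k : ℝ) := by exact_mod_cast hk
      have h3 : m / c₁ ≤ (k : ℝ) := h1.trans h2
      calc m = c₁ * (m / c₁) := by field_simp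
        _ ≤ c₁ * k := by nlinarith
  -- uniqueness of graded component
  have huniq : ∀ (f : R) (i j : ℕ), f ∈ A i → f ∈ A j → f ≠ 0 → i = j := by
    intro f i j hi hj hf
    by_contra hne
    exact hf (by rw [← DirectSum.decompose_of_mem_same A hj,
      DirectSum.decompose_of_mem_ne A hi hne])
  set S : ℕ → Submodule ℂ R := fun j => ⨆ k ∈ Finset.range j, A k with hSdef
  have hS0 : S 0 = ⊥ := by simp [hSdef]
  have hSsucc : ∀ j, S (j + 1) = A j ⊔ S j := by
    intro j
    simp only [hSdef, Finset.range_add_one, Finset.iSup_insert]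
  have hSle : ∀ k j, k < j → A k ≤ S j := by
    intro k j hk
    exact le_biSup _ (Finset.mem_range.mpr hk)
  have hS_supp : ∀ (j : ℕ) (h : R), h ∈ S j → ∀ i, j ≤ i →
      ((decompose A h) i : R) = 0 := by
    intro j
    induction j with
    | zero =>
      intro h hh i _
      rw [hS0, Submodule.mem_bot] at hh
      simp [hh]
    | succ j ih =>
      intro h hh i hi
      rw [hSsucc, Submodule.mem_sup] at hh
      obtain ⟨x, hx, y, hy, rfl⟩ := hh
      have hxi : ((decompose A x) i : R) = 0 :=
        DirectSum.decompose_of_mem_ne A hx (by omega)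
      have hyi : ((decompose A y) i : R) = 0 := ih y hy i (by omega)
      rw [DirectSum.decompose_add]
      simp only [DirectSum.add_apply, Submodule.coe_add, hxi, hyi, add_zero]
  have hK4 : ∀ (j : ℕ) (h : R), (∀ i, j ≤ i → ((decompose A h) i : R) = 0) →
      h ∈ S j := by
    intro j h hh
    rw [← DirectSum.sum_support_decompose A h]
    apply Submodule.sum_mem
    intro i hi
    by_cases hij : i < j
    · exact hSle i j hij (decompose A h i).2
    · have : ((decompose A h) i : R) = 0 := hh i (by omega)
      rw [this]; exact Submodule.zero_mem _
  have hK1 : ∀ g : R, (∀ i, i < N → ((decompose A g) i : R) = 0) → g ∈ a := by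
    intro g hg
    by_cases hg0 : g = 0
    · exact (ha g).mpr (Or.inl hg0)
    · obtain ⟨⟨i₀, hi₀ne, hi₀eq⟩, hlb⟩ := hv₀ g hg0
      have hi₀ : N ≤ i₀ := by
        by_contra hlt
        exact hi₀ne (ZeroMemClass.coe_eq_zero.mp (hg i₀ (by omega)))
      have h1 : m ≤ c₁ * v₀ g := by rw [hi₀eq]; exact hNle i₀ hi₀
      exact (ha g).mpr (Or.inr (h1.trans (hsand g hg0).1))
  have hK2 : ∀ k : ℕ, N ≤ k → ∀ f : R, f ∈ A k → f ∈ F k := by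
    intro k hk f hf
    rw [hF]
    refine ⟨hf, ?_⟩
    by_cases hf0 : f = 0
    · exact Or.inl hf0
    right
    refine ⟨f, hf0, ?_, ?_⟩
    · obtain ⟨⟨i₀, hi₀ne, hi₀eq⟩, hlb⟩ := hv₀ f hf0
      have hik : i₀ = k := by
        by_contra hne
        exact hi₀ne (ZeroMemClass.coe_eq_zero.mp
          (DirectSum.decompose_of_mem_ne A hf (Ne.symm hne)))
      have h1 : m ≤ c₁ * v₀ f := by rw [hi₀eq, hik]; exact hNle k hk
      exact h1.trans (hsand f hf0).1
    · obtain ⟨i, hieq, hine, hmax⟩ := hld f hf0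
      have hik : i = k := by
        by_contra hne
        exact hine (ZeroMemClass.coe_eq_zero.mp
          (DirectSum.decompose_of_mem_ne A hf (Ne.symm hne)))
      rw [← hieq, hik, DirectSum.decompose_of_mem_same A hf]
  set V : ℕ → Submodule ℂ (R ⧸ a) := fun j => (S j).map a.mkQ with hVdef
  have hmap_self : ∀ p : Submodule ℂ R, ∀ q : Submodule ℂ R, q ≤ p →
      Submodule.map p.mkQ q = ⊥ := by
    intro p q hq
    rw [eq_bot_iff]
    rintro x ⟨y, hy, rfl⟩
    simp only [Submodule.mem_bot, Submodule.mkQ_apply]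
    exact (Submodule.Quotient.mk_eq_zero p).mpr (hq hy)
  -- decomposition of the truncation
  have hlowdec : ∀ (g : R) (n : ℕ) (i : ℕ), i < n →
      ((decompose A (∑ i' ∈ Finset.range n, ((decompose A g) i' : R))) i : R)
        = ((decompose A g) i : R) := by
    intro g n i hi
    rw [DirectSum.decompose_sum]
    have : ∀ i' : ℕ, decompose A ((decompose A g) i' : R) =
        DirectSum.of (fun k => ↥(A k)) i' ((decompose A g) i') := by
      intro i'; exact DirectSum.decompose_coe A _
    simp only [this]
    rw [DFinsupp.finset_sum_apply]
    rw [Finset.sum_eq_single i]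
    · rw [DirectSum.of_eq_same]
    · intro b _ hb
      rw [DirectSum.of_eq_of_ne _ _ _ hb.symm]
    · intro hni; exact absurd (Finset.mem_range.mpr hi) hni
  have hSN : S N ⊔ a = ⊤ := by
    rw [eq_top_iff]
    intro g _
    set low := ∑ i' ∈ Finset.range N, ((decompose A g) i' : R) with hlowdef
    have hlow : low ∈ S N := by
      apply Submodule.sum_mem
      intro i hi
      exact hSle i N (Finset.mem_range.mp hi) (decompose A g i).2
    have hhigh : g - low ∈ a := by
      apply hK1
      intro i hiN
      rw [DirectSum.decompose_sub]
      simp only [DirectSum.sub_apply, Submodule.coe_sub]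
      rw [hlowdec g N i hiN, sub_self]
    have : g = low + (g - low) := by ring
    rw [this]
    exact Submodule.add_mem_sup hlow hhigh
  have hVN : V N = ⊤ := by
    have h1 : Submodule.map a.mkQ (S N ⊔ a) = ⊤ := by
      rw [hSN, Submodule.map_top, Submodule.range_mkQ]
    rw [Submodule.map_sup, hmap_self a a le_rfl, sup_bot_eq] at h1
    exact h1
  have hfinQ : Module.Finite ℂ (R ⧸ a) := by
    rw [Module.finite_def, ← hVN]
    apply Submodule.FG.map
    have hfg : ∀ j, (S j).FG := by
      intro j
      induction j with
      | zero => rw [hS0]; exact Submodule.fg_bot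
      | succ j ih => rw [hSsucc]; exact (Module.Finite.iff_fg.mp inferInstance).sup ih
    exact hfg N
  haveI := hfinQ
  -- kernel computation
  have hker : ∀ j : ℕ,
      LinearMap.ker (((V j).mkQ.comp a.mkQ).comp (A j).subtype)
        = (F j).comap (A j).subtype := by
    intro j
    ext f
    simp only [LinearMap.mem_ker, LinearMap.comp_apply, Submodule.mkQ_apply,
      Submodule.mem_comap, Submodule.coe_subtype]
    rw [Submodule.Quotient.mk_eq_zero]
    constructor
    · intro hmem
      obtain ⟨h, hh, hhe⟩ := hmem
      rw [hF]
      refine ⟨f.2, ?_⟩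
      by_cases hf0 : (f : R) = 0
      · exact Or.inl hf0
      right
      have hb : (f : R) - h ∈ a := by
        rw [← Submodule.Quotient.eq]
        exact hhe.symm
      set b := (f : R) - h with hbdef
      have hb0 : b ≠ 0 := by
        intro h0
        have hfh : (f : R) = h := by
          have := sub_eq_zero.mp h0; exact this
        have hfS : (f : R) ∈ S j := hfh ▸ hh
        have h1 := hS_supp j _ hfS j le_rfl
        rw [DirectSum.decompose_of_mem_same A f.2] at h1
        exact hf0 h1
      refine ⟨b, hb0, ((ha b).mp hb).resolve_left hb0, ?_⟩
      obtain ⟨i, hieq, hine, hmax⟩ := hld b hb0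
      have hbj : ((decompose A b) j : R) = (f : R) := by
        rw [hbdef, DirectSum.decompose_sub]
        simp only [DirectSum.sub_apply, Submodule.coe_sub]
        rw [DirectSum.decompose_of_mem_same A f.2, hS_supp j h hh j le_rfl, sub_zero]
      have hij : i = j := by
        rcases lt_trichotomy i j with hlt | heq | hgt
        · have : (decompose A b) j ≠ 0 := by
            intro h0; rw [h0] at hbj; exact hf0 hbj.symm
          have := hmax j this
          omega
        · exact heq
        · have h1 : ((decompose A b) i : R) = 0 := by
            rw [hbdef, DirectSum.decompose_sub]
            simp only [DirectSum.sub_apply, Submodule.coe_sub]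
            rw [DirectSum.decompose_of_mem_ne A f.2 (by omega : j ≠ i),
              hS_supp j h hh i (by omega), sub_zero]
          exact absurd (ZeroMemClass.coe_eq_zero.mp h1) hine
      rw [← hieq, hij, hbj]
    · intro hFmem
      rw [hF] at hFmem
      rcases hFmem.2 with hf0 | ⟨g, hg0, hgv, hgld⟩
      · rw [hf0]
        simp only [Submodule.Quotient.mk_zero]
        exact Submodule.zero_mem _
      · have hga : g ∈ a := (ha g).mpr (Or.inr hgv)
        obtain ⟨i, hieq, hine, hmax⟩ := hld g hg0
        have hldf : ((decompose A g) i : R) = (f : R) := by rw [hieq, hgld]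
        have hf0 : (f : R) ≠ 0 := by
          intro h0
          exact hine (ZeroMemClass.coe_eq_zero.mp (by rw [hldf, h0]))
        have hij : i = j := by
          apply huniq (f : R) i j _ f.2 hf0
          exact hldf ▸ (decompose A g i).2
        have hhS : (f : R) - g ∈ S j := by
          apply hK4
          intro k hk
          rw [DirectSum.decompose_sub]
          simp only [DirectSum.sub_apply, Submodule.coe_sub]
          rcases eq_or_lt_of_le hk with hkj | hkj
          · rw [← hkj, DirectSum.decompose_of_mem_same A f.2,
              show ((decompose A g) j : R) = (f : R) from hij ▸ hldf, sub_self]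
          · rw [DirectSum.decompose_of_mem_ne A f.2 (by omega : j ≠ k)]
            have : ((decompose A g) k : R) = 0 := by
              by_contra hne
              have := hmax k (fun h0 => hne (by rw [h0]; rfl))
              omega
            rw [this, sub_zero]
        refine ⟨(f : R) - g, hhS, ?_⟩
        rw [Submodule.mkQ_apply, Submodule.Quotient.eq]
        simpa using a.neg_mem hga
  -- per-step dimension count
  have hstep : ∀ j : ℕ, Module.finrank ℂ ↥(V (j + 1)) =
      Module.finrank ℂ ↥(V j) +
        Module.finrank ℂ (↥(A j) ⧸ (F j).comap (A j).subtype) := by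
    intro j
    have hVle : V j ≤ V (j + 1) := by
      apply Submodule.map_mono
      rw [hSsucc]
      exact le_sup_right
    set ψ := ((V j).mkQ.comp a.mkQ).comp (A j).subtype with hψ
    set χ := (V j).mkQ.comp (V (j + 1)).subtype with hχ
    have hrange : LinearMap.range ψ = LinearMap.range χ := by
      rw [hψ, hχ, LinearMap.range_comp, LinearMap.range_comp,
        Submodule.map_comp, Submodule.range_subtype, Submodule.range_subtype]
      have hVsucc : V (j + 1) = Submodule.map a.mkQ (A j) ⊔ V j := by
        show (S (j+1)).map a.mkQ = _
        rw [hSsucc, Submodule.map_sup]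
      have hmap_self' : Submodule.map (V j).mkQ (V j) = ⊥ := by
        rw [eq_bot_iff]
        rintro x ⟨y, hy, rfl⟩
        simp only [Submodule.mem_bot, Submodule.mkQ_apply]
        exact (Submodule.Quotient.mk_eq_zero _).mpr hy
      rw [hVsucc, Submodule.map_sup, hmap_self', sup_bot_eq]
    have h1 : Module.finrank ℂ (↥(A j) ⧸ LinearMap.ker ψ) =
        Module.finrank ℂ ↥(LinearMap.range ψ) :=
      LinearEquiv.finrank_eq ψ.quotKerEquivRange
    have h2 : Module.finrank ℂ ↥(LinearMap.range χ) +
        Module.finrank ℂ ↥(LinearMap.ker χ) = Module.finrank ℂ ↥(V (j + 1)) :=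
      LinearMap.finrank_range_add_finrank_ker χ
    have h3 : LinearMap.ker χ = (V j).comap (V (j + 1)).subtype := by
      rw [hχ, LinearMap.ker_comp, Submodule.ker_mkQ]
    have h4 : Module.finrank ℂ ↥(LinearMap.ker χ) = Module.finrank ℂ ↥(V j) := by
      rw [h3]
      exact LinearEquiv.finrank_eq (Submodule.comapSubtypeEquivOfLe hVle)
    rw [hker j] at h1
    rw [← h2, h4, ← hrange, ← h1]
    omega
  have hsum : ∀ n : ℕ, Module.finrank ℂ ↥(V n) =
      ∑ j ∈ Finset.range n,
        Module.finrank ℂ (↥(A j) ⧸ (F j).comap (A j).subtype) := by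
    intro n
    induction n with
    | zero =>
      simp only [Finset.range_zero, Finset.sum_empty]
      have : V 0 = ⊥ := by rw [hVdef]; simp [hS0]
      rw [this]
      exact finrank_bot ℂ _
    | succ n ih =>
      rw [Finset.sum_range_succ, hstep n, ih]
  have hQ : Module.finrank ℂ (R ⧸ a) =
      ∑ j ∈ Finset.range N,
        Module.finrank ℂ (↥(A j) ⧸ (F j).comap (A j).subtype) := by
    rw [← finrank_top ℂ (R ⧸ a), ← hVN, hsum]
  have hvanish : ∀ k ∉ Finset.range N,
      ((Module.finrank ℂ (↥(A k) ⧸ (F k).comap (A k).subtype) : ℝ)) = 0 := by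
    intro k hk
    have hkN : N ≤ k := by
      by_contra h
      exact hk (Finset.mem_range.mpr (by omega))
    have htop : (F k).comap (A k).subtype = ⊤ := by
      rw [eq_top_iff]
      intro f _
      exact hK2 k hkN (f : R) f.2
    haveI : Subsingleton (↥(A k) ⧸ (F k).comap (A k).subtype) :=
      Submodule.Quotient.subsingleton_iff.mpr htop
    rw [Module.finrank_zero_of_subsingleton]
    norm_num
  rw [tsum_eq_sum hvanish, hQ]
  push_cast
  rfl
end
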